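/- Let 𝒞 be a Z2Z4-additive code generated as a group by elements u₁,…,u_γ of order at most two and elements v₁,…,v_δ of order four, and let C = Φ(𝒞). Then the linear span ⟨C⟩ of C in Z2^(α+2β) is spanned over Z2 by the vectors {Φ(u_i)}_{i=1}^γ, {Φ(v_j)}_{j=1}^δ, {Φ(2v_j)}_{j=1}^δ, and {Φ(2(v_j*v_k))}_{1≤j<k≤δ}. -/
import Mathlib


/-- The ambient group `Z2^α × Z4^β`, with componentwise ring structure
(so `u * v` is the componentwise product). -/
abbrev Amb (α β : ℕ) := (Fin α → ZMod 2) × (Fin β → ZMod 4)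

/-- The binary space `Z2^α × (Z2²)^β ≅ Z2^(α+2β)`. -/
abbrev Bin (α β : ℕ) := (Fin α → ZMod 2) × (Fin β → ZMod 2 × ZMod 2)

/-- The Gray map `φ : Z4 → Z2²` with `φ(0)=(0,0), φ(1)=(0,1), φ(2)=(1,1), φ(3)=(1,0)`. -/
def grayPair (y : ZMod 4) : ZMod 2 × ZMod 2 :=
  match y.val with
  | 0 => (0, 0)
  | 1 => (0, 1)
  | 2 => (1, 1)
  | _ => (1, 0)

/-- The extended Gray map `Φ : Z2^α × Z4^β → Z2^(α+2β)`. -/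
def Phi {α β : ℕ} (u : Amb α β) : Bin α β :=
  (u.1, fun i => grayPair (u.2 i))

/-- The kernel `K(C) = {x | x + C = C}` of a binary code. -/
def kernelK {α β : ℕ} (C : Set (Bin α β)) : Set (Bin α β) :=
  {x | (fun y => x + y) '' C = C}

/-- The rank of a binary code: the `Z2`-dimension of its linear span. -/
noncomputable def rankOf {α β : ℕ} (C : Set (Bin α β)) : ℕ :=
  Module.finrank (ZMod 2) (Submodule.span (ZMod 2) C)

/-- The dimension of the kernel of a binary code. -/
noncomputable def kerDim {α β : ℕ} (C : Set (Bin α β)) : ℕ :=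
  Module.finrank (ZMod 2) (Submodule.span (ZMod 2) (kernelK C))

/-- A `Z2Z4`-additive code `C ⊆ Z2^α × Z4^β` is of type `(α,β;γ,δ;κ)`:
`|C| = 2^(γ+2δ)`, the number of elements `x` with `2x = 0` is `2^(γ+δ)`, and `κ` is the
`Z2`-dimension of the projection onto the first `α` coordinates of `{x ∈ C | 2x = 0}`. -/
def IsTypeOf (α β γ δ κ : ℕ) (C : AddSubgroup (Amb α β)) : Prop :=
  Nat.card C = 2 ^ (γ + 2 * δ) ∧
  Nat.card {x : Amb α β | x ∈ C ∧ 2 • x = 0} = 2 ^ (γ + δ) ∧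
  Module.finrank (ZMod 2)
    (Submodule.span (ZMod 2) (Prod.fst '' {x : Amb α β | x ∈ C ∧ 2 • x = 0})) = κ

lemma grayPair_add : ∀ a b : ZMod 4,
    grayPair (a + b) = grayPair a + grayPair b + grayPair (2 * (a * b)) := by decide

lemma grayPair_zero : grayPair 0 = 0 := by decide

lemma grayPair_neg : ∀ a : ZMod 4, grayPair (-a) = grayPair a + grayPair (2 * a) := by decide

lemma z2_add : ∀ a b : ZMod 2, a + b = a + b + 2 * (a * b) := by decide

lemma Phi_add {α β : ℕ} (x y : Amb α β) :
    Phi (x + y) = Phi x + Phi y + Phi (2 * (x * y)) := by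
  unfold Phi
  refine Prod.ext ?_ ?_
  · funext i
    simpa using z2_add (x.1 i) (y.1 i)
  · funext i
    simpa using grayPair_add (x.2 i) (y.2 i)

lemma Phi_zero {α β : ℕ} : (Phi 0 : Bin α β) = 0 := by
  unfold Phi
  refine Prod.ext rfl ?_
  funext i
  simpa using grayPair_zero

lemma Phi_neg {α β : ℕ} (x : Amb α β) : Phi (-x) = Phi x + Phi (2 * x) := by
  unfold Phi
  refine Prod.ext ?_ ?_
  · funext i
    show -(x.1 i) = x.1 i + 2 * x.1 i
    exact (by decide : ∀ a : ZMod 2, -a = a + 2 * a) (x.1 i)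
  · funext i; simpa using grayPair_neg (x.2 i)

lemma Phi_add_of {α β : ℕ} {x y : Amb α β} (h : 2 * (x * y) = 0) :
    Phi (x + y) = Phi x + Phi y := by
  rw [Phi_add, h, Phi_zero, add_zero]

lemma z2_four : ∀ a : ZMod 2, a + a + a + a = 0 := by decide
lemma z4_four : ∀ a : ZMod 4, a + a + a + a = 0 := by decide
lemma z2_sq : ∀ a : ZMod 2, a * a + a * a = a + a := by decide
lemma z4_sq : ∀ a : ZMod 4, a * a + a * a = a + a := by decide

lemma amb_four {α β : ℕ} (z : Amb α β) : 4 * z = 0 := by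
  have h : z + z + z + z = 0 :=
    Prod.ext (funext fun i => z2_four (z.1 i)) (funext fun i => z4_four (z.2 i))
  linear_combination h

lemma amb_two_sq {α β : ℕ} (x : Amb α β) : 2 * (x * x) = 2 * x := by
  have h : x * x + x * x = x + x :=
    Prod.ext (funext fun i => z2_sq (x.1 i)) (funext fun i => z4_sq (x.2 i))
  linear_combination h

lemma amb_tor {α β : ℕ} (x y : Amb α β) : 2 * ((2 * x) * (2 * y)) = 0 := by
  linear_combination 2 * amb_four (x * y)

lemma amb_neg_two {α β : ℕ} (x : Amb α β) : -(2 * x) = 2 * x := by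
  linear_combination -amb_four x

lemma amb_smul {α β : ℕ} (x : Amb α β) : 2 • x = 2 * x := by
  rw [two_nsmul, two_mul]

/-- If `𝒞` is generated by `u₁,…,u_γ` of order at most two and `v₁,…,v_δ` of
order four, then the linear span of `Φ(𝒞)` is spanned by the `Φ(u_i)`, `Φ(v_j)`, `Φ(2v_j)`
and `Φ(2(v_j*v_k))` for `j < k`. -/
theorem span_gray_image_eq (α β γ δ : ℕ) (u : Fin γ → Amb α β) (v : Fin δ → Amb α β)
    (hu : ∀ i, 2 • u i = 0) (hv : ∀ j, 2 • v j ≠ 0) :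
    Submodule.span (ZMod 2)
        (Phi '' (AddSubgroup.closure (Set.range u ∪ Set.range v) : Set (Amb α β))) =
      Submodule.span (ZMod 2)
        ((Set.range fun i => Phi (u i)) ∪ (Set.range fun j => Phi (v j)) ∪
          (Set.range fun j => Phi (2 • v j)) ∪
          {w | ∃ j k, j < k ∧ w = Phi (2 * (v j * v k))}) := by
  set K := AddSubgroup.closure (Set.range u ∪ Set.range v) with hK
  set S := Submodule.span (ZMod 2)
      ((Set.range fun i => Phi (u i)) ∪ (Set.range fun j => Phi (v j)) ∪
        (Set.range fun j => Phi (2 • v j)) ∪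
        {w | ∃ j k, j < k ∧ w = Phi (2 * (v j * v k))}) with hS
  have hU : ∀ i, 2 * u i = 0 := fun i => by rw [← amb_smul]; exact hu i
  -- membership of the four kinds of generators in S
  have hSu : ∀ i, Phi (u i) ∈ S := fun i =>
    Submodule.subset_span (Set.mem_union_left _ (Set.mem_union_left _
      (Set.mem_union_left _ ⟨i, rfl⟩)))
  have hSv : ∀ j, Phi (v j) ∈ S := fun j =>
    Submodule.subset_span (Set.mem_union_left _ (Set.mem_union_left _
      (Set.mem_union_right _ ⟨j, rfl⟩)))
  have hS2v : ∀ j, Phi (2 • v j) ∈ S := fun j =>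
    Submodule.subset_span (Set.mem_union_left _ (Set.mem_union_right _ ⟨j, rfl⟩))
  have hSvv : ∀ j k, j < k → Phi (2 * (v j * v k)) ∈ S := fun j k h =>
    Submodule.subset_span (Set.mem_union_right _ ⟨j, k, h, rfl⟩)
  -- step 1: for generators g and all d ∈ K, Phi (2*(g*d)) ∈ S
  have inner : ∀ g ∈ Set.range u ∪ Set.range v, ∀ d ∈ K, Phi (2 * (g * d)) ∈ S := by
    rintro g (⟨i, rfl⟩ | ⟨j, rfl⟩) d hd
    · have h : 2 * (u i * d) = 0 := by
        rw [show 2 * (u i * d) = (2 * u i) * d from by ring, hU i, zero_mul]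
      rw [h, Phi_zero]; exact zero_mem _
    · refine AddSubgroup.closure_induction
        (p := fun d _ => Phi (2 * (v j * d)) ∈ S) ?_ ?_ ?_ ?_ hd
      · rintro x (⟨i, rfl⟩ | ⟨k, rfl⟩)
        · have h : 2 * (v j * u i) = 0 := by
            rw [show 2 * (v j * u i) = (2 * u i) * v j from by ring, hU i, zero_mul]
          rw [h, Phi_zero]; exact zero_mem _
        · rcases lt_trichotomy j k with h | h | h
          · exact hSvv j k h
          · subst h
            rw [show 2 * (v j * v j) = 2 • v j from by rw [amb_two_sq, amb_smul]]
            exact hS2v j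
          · rw [show 2 * (v j * v k) = 2 * (v k * v j) from by ring]
            exact hSvv k j h
      · show Phi (2 * (v j * (0 : Amb α β))) ∈ S
        rw [show 2 * (v j * (0 : Amb α β)) = 0 from by ring, Phi_zero]; exact zero_mem _
      · intro x y hx hy ihx ihy
        show Phi (2 * (v j * (x + y))) ∈ S
        rw [show 2 * (v j * (x + y)) = 2 * (v j * x) + 2 * (v j * y) from by ring]
        rw [Phi_add_of (by rw [show (2 : Amb α β) * (v j * x) * (2 * (v j * y)) =
              (2 * (v j * x)) * (2 * (v j * y)) from by ring]; exact amb_tor _ _)]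
        exact add_mem ihx ihy
      · intro x hx ihx
        show Phi (2 * (v j * -x)) ∈ S
        rw [show 2 * (v j * -x) = -(2 * (v j * x)) from by ring, amb_neg_two]
        exact ihx
  -- step 2: for all c, d ∈ K, Phi (2*(c*d)) ∈ S
  have key : ∀ c ∈ K, ∀ d ∈ K, Phi (2 * (c * d)) ∈ S := by
    intro c hc
    refine AddSubgroup.closure_induction
      (p := fun c _ => ∀ d ∈ K, Phi (2 * (c * d)) ∈ S) ?_ ?_ ?_ ?_ hc
    · exact inner
    · intro d hd
      show Phi (2 * ((0 : Amb α β) * d)) ∈ S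
      rw [show 2 * ((0 : Amb α β) * d) = 0 from by ring, Phi_zero]; exact zero_mem _
    · intro x y hx hy ihx ihy d hd
      show Phi (2 * ((x + y) * d)) ∈ S
      rw [show 2 * ((x + y) * d) = 2 * (x * d) + 2 * (y * d) from by ring]
      rw [Phi_add_of (by rw [show (2 : Amb α β) * (x * d) * (2 * (y * d)) =
            (2 * (x * d)) * (2 * (y * d)) from by ring]; exact amb_tor _ _)]
      exact add_mem (ihx d hd) (ihy d hd)
    · intro x hx ihx d hd
      show Phi (2 * (-x * d)) ∈ S
      rw [show 2 * (-x * d) = -(2 * (x * d)) from by ring, amb_neg_two]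
      exact ihx d hd
  apply le_antisymm
  · rw [Submodule.span_le]
    rintro _ ⟨c, hc, rfl⟩
    refine AddSubgroup.closure_induction (p := fun c _ => Phi c ∈ (S : Set (Bin α β)))
      ?_ ?_ ?_ ?_ hc
    · rintro x (⟨i, rfl⟩ | ⟨j, rfl⟩)
      · exact hSu i
      · exact hSv j
      
    · show Phi (0 : Amb α β) ∈ (S : Set (Bin α β))
      rw [Phi_zero]; exact zero_mem _
    · intro x y hx hy ihx ihy
      show Phi (x + y) ∈ (S : Set (Bin α β))
      rw [Phi_add]
      exact add_mem (add_mem ihx ihy) (key x hx y hy)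
    · intro x hx ihx
      show Phi (-x) ∈ (S : Set (Bin α β))
      rw [Phi_neg]
      refine add_mem ihx ?_
      have := key x hx x hx
      rwa [amb_two_sq] at this
  · rw [Submodule.span_le]
    rintro w (((⟨i, rfl⟩ | ⟨j, rfl⟩) | ⟨j, rfl⟩) | ⟨j, k, hjk, rfl⟩)
    · exact Submodule.subset_span
        ⟨u i, AddSubgroup.subset_closure (Set.mem_union_left _ ⟨i, rfl⟩), rfl⟩
    · exact Submodule.subset_span
        ⟨v j, AddSubgroup.subset_closure (Set.mem_union_right _ ⟨j, rfl⟩), rfl⟩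
    · have hm : v j ∈ K := AddSubgroup.subset_closure (Set.mem_union_right _ ⟨j, rfl⟩)
      exact Submodule.subset_span ⟨2 • v j, nsmul_mem hm 2, rfl⟩
    · have hvj : v j ∈ K := AddSubgroup.subset_closure (Set.mem_union_right _ ⟨j, rfl⟩)
      have hvk : v k ∈ K := AddSubgroup.subset_closure (Set.mem_union_right _ ⟨k, rfl⟩)
      have h := Phi_add (v j) (v k)
      have heq : Phi (2 * (v j * v k)) = Phi (v j + v k) - Phi (v j) - Phi (v k) := by
        rw [h]; abel
      rw [heq]
      refine sub_mem (sub_mem ?_ ?_) ?_ <;> apply Submodule.subset_span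
      · exact ⟨v j + v k, add_mem hvj hvk, rfl⟩
      · exact ⟨v j, hvj, rfl⟩
      · exact ⟨v k, hvk, rfl⟩
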